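/- Truth lemma for the canonical deterministic model K_d of ℜ_d: for every formula φ ∈ Φ₀ and every world (w₁,w₂) of K_d, φ ∈ w₁ if and only if (w₁,w₂) ⊩ φ. -/

import Mathlib

/-- Formulas of the modal language 𝓛: propositional variables, ⊥, →, and ▷. -/
inductive Formula : Type
  | var : ℕ → Formula
  | bot : Formula
  | imp : Formula → Formula → Formula
  | tri : Formula → Formula → Formula
deriving DecidableEq

namespace Formula

/-- ¬φ := φ → ⊥ -/
def neg (φ : Formula) : Formula := imp φ bot
/-- ⊤ := ¬⊥ -/
def top : Formula := neg bot
/-- φ ∨ ψ := ¬φ → ψ -/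
def disj (φ ψ : Formula) : Formula := imp (neg φ) ψ
/-- φ ∧ ψ := ¬(φ → ¬ψ) -/
def conj (φ ψ : Formula) : Formula := neg (imp φ (neg ψ))

/-- `φ` is a substitution instance of a classical propositional tautology:
it evaluates to `true` under every boolean valuation of formulas that
respects `⊥` and `→` (variables and `▷`-formulas are treated as atoms). -/
def IsPropTaut (φ : Formula) : Prop :=
  ∀ v : Formula → Bool, v bot = false →
    (∀ a b, v (imp a b) = (!(v a) || v b)) → v φ = true

/-- Hilbert-style provability.  `Prv false` is the logic ℜ (axioms: classical
tautologies, A1, A2, A3; rules: Modus Ponens and monotonicity M);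
`Prv true` is the logic ℜ_d, which additionally has axiom A4. -/
inductive Prv : Bool → Formula → Prop
  | taut {d : Bool} {φ} : IsPropTaut φ → Prv d φ
  | a1 {d : Bool} (φ ψ χ) : Prv d (imp (tri φ ψ) (imp (tri χ ψ) (tri (disj φ χ) ψ)))
  | a2 {d : Bool} (φ) : Prv d (tri bot φ)
  | a3 {d : Bool} (φ) : Prv d (tri φ top)
  | a4 (φ ψ χ) : Prv true (imp (tri φ ψ) (imp (tri φ χ) (tri φ (conj ψ χ))))
  | mp {d : Bool} {φ ψ} : Prv d (imp φ ψ) → Prv d φ → Prv d ψ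
  | mono {d : Bool} {φ₁ φ₂ ψ₁ ψ₂} : Prv d (imp φ₁ φ₂) → Prv d (imp ψ₁ ψ₂) →
      Prv d (imp (tri φ₂ ψ₁) (tri φ₁ ψ₂))

/-- `Deriv d Δ φ`: φ is derivable from the hypotheses Δ together with all
theorems of the logic (`Prv d`) using only Modus Ponens. -/
inductive Deriv (d : Bool) (Δ : Set Formula) : Formula → Prop
  | hyp {φ} : φ ∈ Δ → Deriv d Δ φ
  | thm {φ} : Prv d φ → Deriv d Δ φ
  | mp {φ ψ} : Deriv d Δ (imp φ ψ) → Deriv d Δ φ → Deriv d Δ ψ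

/-- Conjunction of a list of formulas (empty conjunction is ⊤). -/
def conjList : List Formula → Formula
  | [] => top
  | φ :: l => conj φ (conjList l)

/-- ⋀Γ : conjunction of all formulas of a finite set Γ (⋀∅ = ⊤). -/
noncomputable def bigConj (Γ : Finset Formula) : Formula := conjList Γ.toList

/-- A set of formulas is consistent if ⊥ is not derivable from it. -/
def Consistent (d : Bool) (Δ : Set Formula) : Prop := ¬ Deriv d Δ bot

/-- The pair (u,v) is w-consistent: w ⊬ ⋀u ▷ ¬⋀v. -/
def WCons (d : Bool) (w : Set Formula) (u v : Finset Formula) : Prop :=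
  ¬ Deriv d w (tri (bigConj u) (neg (bigConj v)))

/-- The operation ∼: ∼(¬φ) = φ, and ∼φ = ¬φ if φ is not a negation. -/
def simNeg : Formula → Formula
  | imp φ bot => φ
  | φ => neg φ

/-- Φ is closed under subformulas. -/
def SubClosed (Φ : Finset Formula) : Prop :=
  (∀ a b, imp a b ∈ Φ → a ∈ Φ ∧ b ∈ Φ) ∧ (∀ a b, tri a b ∈ Φ → a ∈ Φ ∧ b ∈ Φ)

/-- Φ is closed under the operation ∼. -/
def SimClosed (Φ : Finset Formula) : Prop := ∀ φ ∈ Φ, simNeg φ ∈ Φ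

/-- w is a maximal consistent subset of Φ: w ⊆ Φ, w is consistent, and for
every φ ∈ Φ either φ ∈ w or ∼φ ∈ w. -/
def MaxCons (d : Bool) (Φ : Finset Formula) (w : Finset Formula) : Prop :=
  w ⊆ Φ ∧ Consistent d ↑w ∧ ∀ φ ∈ Φ, φ ∈ w ∨ simNeg φ ∈ w

/-- Kripke forcing: `rel w u v` means u →_w v, `val w p` means w ⊩ p. -/
def Forces {W : Type*} (rel : W → W → W → Prop) (val : W → ℕ → Prop) :
    W → Formula → Prop
  | w, var p => val w p
  | _, bot => False
  | w, imp a b => Forces rel val w a → Forces rel val w b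
  | w, tri a b => ∀ u v, rel w u v → Forces rel val u a →
      ∃ v', rel w u v' ∧ Forces rel val v' b

end Formula

/-- A Kripke model: a finite set of worlds, a ternary computability relation,
and a forcing relation between worlds and propositional variables. -/
structure KripkeModel where
  W : Type
  fin : Finite W
  rel : W → W → W → Prop
  val : W → ℕ → Prop

/-- A Kripke model is deterministic if for all worlds w, u there is at most
one v with u →_w v. -/
def KripkeModel.Deterministic (M : KripkeModel) : Prop :=
  ∀ w u v v', M.rel w u v → M.rel w u v' → v = v'

/-- Forcing in a Kripke model. -/
def KripkeModel.Forces (M : KripkeModel) : M.W → Formula → Prop :=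
  Formula.Forces M.rel M.val

/-- The standard enumeration of nondeterministic partial recursive functions:
ζ_w(u) = the set of possible outputs of machine (code) w on input u. -/
def zeta (w u : ℕ) : Set ℕ :=
  {v | ((Denumerable.ofNat Nat.Partrec.Code w).eval (Nat.pair u v)).Dom}

/-- The standard enumeration of deterministic partial recursive functions:
ξ_w(u) = the value of the partial recursive function with code w on input u. -/
def xi (w u : ℕ) : Part ℕ :=
  (Denumerable.ofNat Nat.Partrec.Code w).eval u

namespace Formula

/-- Set semantics for nondeterministic partial recursive functions
(existential reading of ▷). -/
def semN (val : ℕ → Set ℕ) : Formula → Set ℕ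
  | var p => val p
  | bot => ∅
  | imp a b => (Set.univ \ semN val a) ∪ semN val b
  | tri a b => {w | ∀ u ∈ semN val a, zeta w u ≠ ∅ → zeta w u ∩ semN val b ≠ ∅}

/-- Set semantics for deterministic partial recursive functions. -/
def semD (val : ℕ → Set ℕ) : Formula → Set ℕ
  | var p => val p
  | bot => ∅
  | imp a b => (Set.univ \ semD val a) ∪ semD val b
  | tri a b => {w | ∀ u ∈ semD val a, ∀ h : (xi w u).Dom, (xi w u).get h ∈ semD val b}

/-- Universal set semantics for nondeterministic partial recursive functions:
every terminating computation path from φ* ends in ψ*. -/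
def semU (val : ℕ → Set ℕ) : Formula → Set ℕ
  | var p => val p
  | bot => ∅
  | imp a b => (Set.univ \ semU val a) ∪ semU val b
  | tri a b => {w | ∀ u ∈ semU val a, zeta w u ⊆ semU val b}

/-- A canonical injective encoding of formulas as natural numbers. -/
def enc : Formula → ℕ
  | var n => 4 * n
  | bot => 1
  | imp a b => 4 * Nat.pair (enc a) (enc b) + 2
  | tri a b => 4 * Nat.pair (enc a) (enc b) + 3

end Formula

namespace Formula

/-- Worlds of the canonical deterministic Kripke model K_d for ℜ_d over Φ₀:
pairs (w₁,w₂) of maximal consistent (in ℜ_d) subsets of Φ₀. -/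
def KdWorld (Φ₀ : Finset Formula) : Type :=
  {p : Finset Formula × Finset Formula // MaxCons true Φ₀ p.1 ∧ MaxCons true Φ₀ p.2}

/-- Computability relation of K_d: (u₁,u₂) →_{(w₁,w₂)} (v₁,v₂) iff the pair
(u₁,v₁) is w₁-consistent in ℜ_d and u₂ = v₁ = v₂. -/
def Kdrel (Φ₀ : Finset Formula) :
    KdWorld Φ₀ → KdWorld Φ₀ → KdWorld Φ₀ → Prop :=
  fun W U V => WCons true (↑W.1.1 : Set Formula) U.1.1 V.1.1 ∧
    U.1.2 = V.1.1 ∧ V.1.1 = V.1.2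

/-- Atomic forcing of K_d: (w₁,w₂) ⊩ p iff p ∈ w₁. -/
def Kdval (Φ₀ : Finset Formula) : KdWorld Φ₀ → ℕ → Prop :=
  fun W n => var n ∈ W.1.1

/-! ### Auxiliary development for the truth lemma -/

/-- Disjunction of a list of formulas (empty disjunction is ⊥). -/
def disjList : List Formula → Formula
  | [] => bot
  | φ :: l => disj φ (disjList l)

section Valuation

variable {v : Formula → Bool}

lemma v_neg (hb : v bot = false) (hi : ∀ a b, v (imp a b) = (!(v a) || v b))
    (a : Formula) : v (neg a) = !v a := by simp [neg, hi, hb]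

lemma v_conj (hb : v bot = false) (hi : ∀ a b, v (imp a b) = (!(v a) || v b))
    (a b : Formula) : v (conj a b) = (v a && v b) := by
  simp [conj, hi, v_neg hb hi]

lemma v_disj (hb : v bot = false) (hi : ∀ a b, v (imp a b) = (!(v a) || v b))
    (a b : Formula) : v (disj a b) = (v a || v b) := by
  simp [disj, hi, v_neg hb hi]

lemma v_top (hb : v bot = false) (hi : ∀ a b, v (imp a b) = (!(v a) || v b)) :
    v top = true := by simp [top, v_neg hb hi, hb]

lemma v_conjList (hb : v bot = false) (hi : ∀ a b, v (imp a b) = (!(v a) || v b))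
    (l : List Formula) : v (conjList l) = l.all v := by
  induction l with
  | nil => simpa [conjList] using v_top hb hi
  | cons a l ih => simp [conjList, v_conj hb hi, ih]

lemma v_disjList (hb : v bot = false) (hi : ∀ a b, v (imp a b) = (!(v a) || v b))
    (l : List Formula) : v (disjList l) = l.any v := by
  induction l with
  | nil => simp [disjList, hb]
  | cons a l ih => simp [disjList, v_disj hb hi, ih]

lemma simNeg_cases (χ : Formula) :
    (∃ a, χ = imp a bot ∧ simNeg χ = a) ∨ simNeg χ = neg χ := by
  cases χ with
  | imp a b =>
    cases b
    case bot => exact Or.inl ⟨a, rfl, rfl⟩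
    all_goals exact Or.inr rfl
  | var n => exact Or.inr rfl
  | bot => exact Or.inr rfl
  | tri a b => exact Or.inr rfl

lemma v_simNeg (hb : v bot = false) (hi : ∀ a b, v (imp a b) = (!(v a) || v b))
    (χ : Formula) : v (simNeg χ) = !v χ := by
  rcases simNeg_cases χ with ⟨a, rfl, hs⟩ | hs
  · rw [hs, hi, hb]; cases v a <;> rfl
  · rw [hs, v_neg hb hi]

end Valuation

/-! ### Concrete tautologies -/

lemma taut_id (a : Formula) : IsPropTaut (imp a a) := by
  intro v hb hi; rw [hi]; cases v a <;> rfl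

lemma taut_k (a b : Formula) : IsPropTaut (imp b (imp a b)) := by
  intro v hb hi; rw [hi, hi]; cases v a <;> cases v b <;> rfl

lemma taut_s (a b c : Formula) :
    IsPropTaut (imp (imp a (imp b c)) (imp (imp a b) (imp a c))) := by
  intro v hb hi; simp only [hi]; cases v a <;> cases v b <;> cases v c <;> rfl

lemma taut_top : IsPropTaut top := fun v hb hi => v_top hb hi

lemma taut_conj_intro (a b : Formula) : IsPropTaut (imp a (imp b (conj a b))) := by
  intro v hb hi; simp only [hi, v_conj hb hi]; cases v a <;> cases v b <;> rfl

lemma taut_curry (a B χ : Formula) :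
    IsPropTaut (imp (imp B (imp a χ)) (imp (conj a B) χ)) := by
  intro v hb hi; simp only [hi, v_conj hb hi]
  cases v a <;> cases v B <;> cases v χ <;> rfl

lemma taut_simNeg_imp (a b : Formula) : IsPropTaut (imp (simNeg a) (imp a b)) := by
  intro v hb hi; simp only [hi, v_simNeg hb hi]; cases v a <;> cases v b <;> rfl

lemma taut_conjList_mem {l : List Formula} {φ : Formula} (h : φ ∈ l) :
    IsPropTaut (imp (conjList l) φ) := by
  intro v hb hi
  rw [hi, v_conjList hb hi]
  cases hall : l.all v with
  | false => simp
  | true => simp [List.all_eq_true.1 hall φ h]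

lemma taut_imp_negconj {l : List Formula} {ψ : Formula} (h : simNeg ψ ∈ l) :
    IsPropTaut (imp ψ (neg (conjList l))) := by
  intro v hb hi
  rw [hi, v_neg hb hi, v_conjList hb hi]
  cases hall : l.all v with
  | false => simp
  | true =>
    have h1 := List.all_eq_true.1 hall _ h
    rw [v_simNeg hb hi] at h1
    simp only [Bool.not_eq_true'] at h1
    simp [h1]

/-! ### Derivability lemmas -/

theorem deduction {d : Bool} {Δ : Set Formula} {φ ψ : Formula}
    (h : Deriv d (insert φ Δ) ψ) : Deriv d Δ (imp φ ψ) := by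
  induction h with
  | hyp hm =>
    rcases Set.mem_insert_iff.1 hm with rfl | hm
    · exact Deriv.thm (Prv.taut (taut_id _))
    · exact Deriv.mp (Deriv.thm (Prv.taut (taut_k φ _))) (Deriv.hyp hm)
  | thm hp => exact Deriv.mp (Deriv.thm (Prv.taut (taut_k φ _))) (Deriv.thm hp)
  | mp _ _ ih1 ih2 =>
    exact Deriv.mp (Deriv.mp (Deriv.thm (Prv.taut (taut_s φ _ _))) ih1) ih2

lemma prv_of_deriv_empty {d : Bool} {φ : Formula} (h : Deriv d ∅ φ) : Prv d φ := by
  induction h with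
  | hyp hm => exact absurd hm (Set.notMem_empty _)
  | thm hp => exact hp
  | mp _ _ ih1 ih2 => exact Prv.mp ih1 ih2

lemma deriv_list_conj {d : Bool} (l : List Formula) (χ : Formula)
    (h : Deriv d {x | x ∈ l} χ) : Prv d (imp (conjList l) χ) := by
  induction l generalizing χ with
  | nil =>
    have he : ({x | x ∈ ([] : List Formula)} : Set Formula) = ∅ := by ext x; simp
    rw [he] at h
    exact Prv.mp (Prv.taut (taut_k top χ)) (prv_of_deriv_empty h)
  | cons a l ih =>
    have he : ({x | x ∈ a :: l} : Set Formula) = insert a {x | x ∈ l} := by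
      ext x; simp [List.mem_cons]
    rw [he] at h
    have h1 : Prv d (imp (conjList l) (imp a χ)) := ih _ (deduction h)
    exact Prv.mp (Prv.taut (taut_curry a (conjList l) χ)) h1

lemma deriv_conjList_intro {d : Bool} {Δ : Set Formula} (l : List Formula)
    (h : ∀ x ∈ l, Deriv d Δ x) : Deriv d Δ (conjList l) := by
  induction l with
  | nil => exact Deriv.thm (Prv.taut taut_top)
  | cons a l ih =>
    exact Deriv.mp
      (Deriv.mp (Deriv.thm (Prv.taut (taut_conj_intro a (conjList l))))
        (h a (List.mem_cons_self)))
      (ih fun x hx => h x (List.mem_cons_of_mem _ hx))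

lemma deriv_bot_pair {d : Bool} {Δ : Set Formula} {χ : Formula}
    (h1 : Deriv d Δ χ) (h2 : Deriv d Δ (simNeg χ)) : Deriv d Δ bot := by
  rcases simNeg_cases χ with ⟨a, rfl, hs⟩ | hs
  · rw [hs] at h2; exact Deriv.mp h1 h2
  · rw [hs] at h2; exact Deriv.mp h2 h1

lemma mem_of_deriv {Φ₀ w : Finset Formula} {χ : Formula} (hm : MaxCons true Φ₀ w)
    (hχ : χ ∈ Φ₀) (h : Deriv true ↑w χ) : χ ∈ w := by
  by_contra hn
  rcases hm.2.2 χ hχ with h' | h'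
  · exact hn h'
  · exact hm.2.1 (deriv_bot_pair h (Deriv.hyp (Finset.mem_coe.2 h')))

lemma coe_eq_list (u : Finset Formula) : (↑u : Set Formula) = {x | x ∈ u.toList} := by
  ext x; simp

lemma derivA4 {Δ : Set Formula} {A : Formula} (l : List Formula)
    (h : ∀ B ∈ l, Deriv true Δ (tri A B)) : Deriv true Δ (tri A (conjList l)) := by
  induction l with
  | nil => exact Deriv.thm (Prv.a3 A)
  | cons B l ih =>
    exact Deriv.mp
      (Deriv.mp (Deriv.thm (Prv.a4 A B (conjList l))) (h B (List.mem_cons_self)))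
      (ih fun x hx => h x (List.mem_cons_of_mem _ hx))

lemma derivA1 {d : Bool} {Δ : Set Formula} {ψ : Formula} (l : List Formula)
    (h : ∀ A ∈ l, Deriv d Δ (tri A ψ)) : Deriv d Δ (tri (disjList l) ψ) := by
  induction l with
  | nil => exact Deriv.thm (Prv.a2 ψ)
  | cons A l ih =>
    exact Deriv.mp
      (Deriv.mp (Deriv.thm (Prv.a1 A ψ (disjList l))) (h A (List.mem_cons_self)))
      (ih fun x hx => h x (List.mem_cons_of_mem _ hx))

/-! ### The canonical valuation set and the two big tautologies -/

lemma exists_uv (Φ₀ : Finset Formula) (hsim : SimClosed Φ₀) (v : Formula → Bool)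
    (hb : v bot = false) (hi : ∀ a b, v (imp a b) = (!(v a) || v b)) :
    ∃ u : Finset Formula, u ⊆ Φ₀ ∧ (∀ χ ∈ Φ₀, χ ∈ u ∨ simNeg χ ∈ u) ∧
      v (bigConj u) = true ∧ (∀ χ, χ ∈ u ↔ χ ∈ Φ₀ ∧ v χ = true) := by
  classical
  refine ⟨Φ₀.filter (fun χ => v χ = true), Finset.filter_subset _ _, ?_, ?_, ?_⟩
  · intro χ hχ
    by_cases hvχ : v χ = true
    · exact Or.inl (Finset.mem_filter.2 ⟨hχ, hvχ⟩)
    · refine Or.inr (Finset.mem_filter.2 ⟨hsim χ hχ, ?_⟩)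
      rw [v_simNeg hb hi]
      simp only [Bool.not_eq_true] at hvχ
      simp [hvχ]
  · rw [bigConj, v_conjList hb hi]
    refine List.all_eq_true.2 ?_
    intro x hx
    exact (Finset.mem_filter.1 (Finset.mem_toList.1 hx)).2
  · intro χ; simp [Finset.mem_filter]

lemma taut_B (Φ₀ : Finset Formula) (hsim : SimClosed Φ₀) (ψ : Formula)
    (C : List (Finset Formula))
    (hC : ∀ u : Finset Formula, u ⊆ Φ₀ → (∀ χ ∈ Φ₀, χ ∈ u ∨ simNeg χ ∈ u) →
      ψ ∉ u → u ∈ C) :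
    IsPropTaut (imp (conjList (C.map fun u => neg (bigConj u))) ψ) := by
  intro v hb hi
  rw [hi]
  cases hall : v (conjList (C.map fun u => neg (bigConj u))) with
  | false => simp
  | true =>
    rw [v_conjList hb hi] at hall
    obtain ⟨uv, hsubv, hcomp, hvuv, hmemv⟩ := exists_uv Φ₀ hsim v hb hi
    by_cases hψv : ψ ∈ uv
    · simp [(hmemv ψ).1 hψv]
    · have hmem := hC uv hsubv hcomp hψv
      have hneg : v (neg (bigConj uv)) = true :=
        List.all_eq_true.1 hall _ (List.mem_map.2 ⟨uv, hmem, rfl⟩)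
      rw [v_neg hb hi, hvuv] at hneg
      simp at hneg

lemma taut_E (Φ₀ : Finset Formula) (hsim : SimClosed Φ₀) (φ : Formula) (hφ : φ ∈ Φ₀)
    (I T : List (Finset Formula))
    (hIT : ∀ u : Finset Formula, u ⊆ Φ₀ → (∀ χ ∈ Φ₀, χ ∈ u ∨ simNeg χ ∈ u) →
      φ ∈ u → u ∈ I ∨ u ∈ T) :
    IsPropTaut (imp (conjList (I.map fun u => neg (bigConj u)))
      (imp φ (disjList (T.map bigConj)))) := by
  intro v hb hi
  rw [hi, hi]
  cases hall : v (conjList (I.map fun u => neg (bigConj u))) with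
  | false => simp
  | true =>
    cases hvφ : v φ with
    | false => simp
    | true =>
      rw [v_conjList hb hi] at hall
      obtain ⟨uv, hsubv, hcomp, hvuv, hmemv⟩ := exists_uv Φ₀ hsim v hb hi
      have hφuv : φ ∈ uv := (hmemv φ).2 ⟨hφ, hvφ⟩
      rcases hIT uv hsubv hcomp hφuv with hI | hT
      · have hneg : v (neg (bigConj uv)) = true :=
          List.all_eq_true.1 hall _ (List.mem_map.2 ⟨uv, hI, rfl⟩)
        rw [v_neg hb hi, hvuv] at hneg
        simp at hneg
      · have hdj : v (disjList (T.map bigConj)) = true := by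
          rw [v_disjList hb hi]
          exact List.any_eq_true.2 ⟨bigConj uv, List.mem_map.2 ⟨uv, hT, rfl⟩, hvuv⟩
        simp [hdj]

/-! ### The key existence lemma -/

lemma key (Φ₀ : Finset Formula) (hsub : SubClosed Φ₀) (hsim : SimClosed Φ₀)
    {w₁ : Finset Formula} {φ ψ : Formula}
    (hm : tri φ ψ ∈ Φ₀)
    (hnd : ¬ Deriv true (↑w₁ : Set Formula) (tri φ ψ)) :
    ∃ u₁ u₂, MaxCons true Φ₀ u₁ ∧ MaxCons true Φ₀ u₂ ∧ φ ∈ u₁ ∧ ψ ∉ u₂ ∧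
      WCons true (↑w₁ : Set Formula) u₁ u₂ := by
  classical
  by_contra hno
  have hall : ∀ u₁ u₂, MaxCons true Φ₀ u₁ → MaxCons true Φ₀ u₂ → φ ∈ u₁ → ψ ∉ u₂ →
      Deriv true (↑w₁ : Set Formula) (tri (bigConj u₁) (neg (bigConj u₂))) := by
    intro u₁ u₂ h1 h2 h3 h4
    by_contra hd
    exact hno ⟨u₁, u₂, h1, h2, h3, h4, hd⟩
  have hφΦ : φ ∈ Φ₀ := (hsub.2 φ ψ hm).1
  set Comp : Finset Formula → Prop := fun u => ∀ χ ∈ Φ₀, χ ∈ u ∨ simNeg χ ∈ u with hComp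
  set S : Finset (Finset Formula) :=
    Φ₀.powerset.filter (fun u => Comp u ∧ Consistent true ↑u ∧ ψ ∉ u) with hS
  set CS : Finset (Finset Formula) :=
    Φ₀.powerset.filter (fun u => Comp u ∧ ¬ Consistent true ↑u ∧ ψ ∉ u) with hCS
  set T : Finset (Finset Formula) :=
    Φ₀.powerset.filter (fun u => Comp u ∧ Consistent true ↑u ∧ φ ∈ u) with hT
  set I : Finset (Finset Formula) :=
    Φ₀.powerset.filter (fun u => Comp u ∧ ¬ Consistent true ↑u ∧ φ ∈ u) with hI
  set fS : List Formula := S.toList.map (fun u => neg (bigConj u)) with hfS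
  -- from an inconsistent set we can refute its conjunction
  have hrefute : ∀ u : Finset Formula, ¬ Consistent true (↑u : Set Formula) →
      Prv true (neg (bigConj u)) := by
    intro u hu
    have hd : Deriv true (↑u : Set Formula) bot := not_not.1 hu
    rw [coe_eq_list] at hd
    exact deriv_list_conj _ _ hd
  -- Step B
  have htB : IsPropTaut (imp (conjList ((S.toList ++ CS.toList).map
      fun u => neg (bigConj u))) ψ) := by
    refine taut_B Φ₀ hsim ψ _ ?_
    intro u hu1 hu2 hu3
    rw [List.mem_append]
    by_cases hc : Consistent true (↑u : Set Formula)
    · exact Or.inl (Finset.mem_toList.2 (Finset.mem_filter.2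
        ⟨Finset.mem_powerset.2 hu1, hu2, hc, hu3⟩))
    · exact Or.inr (Finset.mem_toList.2 (Finset.mem_filter.2
        ⟨Finset.mem_powerset.2 hu1, hu2, hc, hu3⟩))
  have hDs : Deriv true {x | x ∈ fS} ψ := by
    have hbig : Deriv true {x | x ∈ fS}
        (conjList ((S.toList ++ CS.toList).map fun u => neg (bigConj u))) := by
      apply deriv_conjList_intro
      intro x hx
      rw [List.mem_map] at hx
      obtain ⟨u, hu, rfl⟩ := hx
      rcases List.mem_append.1 hu with h | h
      · refine Deriv.hyp ?_
        simp only [Set.mem_setOf_eq, hfS, List.mem_map]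
        exact ⟨u, h, rfl⟩
      · have hu' := Finset.mem_filter.1 (Finset.mem_toList.1 h)
        exact Deriv.thm (hrefute u hu'.2.2.1)
    exact Deriv.mp (Deriv.thm (Prv.taut htB)) hbig
  have hB' : Prv true (imp (conjList fS) ψ) := deriv_list_conj _ _ hDs
  -- Step A + C : each u₁ ∈ T gives ⋀u₁ ▷ ψ
  have hTstep : ∀ u₁ ∈ T, Deriv true (↑w₁ : Set Formula) (tri (bigConj u₁) ψ) := by
    intro u₁ hu₁
    have hu₁' := Finset.mem_filter.1 hu₁
    have hmax₁ : MaxCons true Φ₀ u₁ :=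
      ⟨Finset.mem_powerset.1 hu₁'.1, hu₁'.2.2.1, hu₁'.2.1⟩
    have h4 : Deriv true (↑w₁ : Set Formula) (tri (bigConj u₁) (conjList fS)) := by
      apply derivA4
      intro B hB
      rw [hfS, List.mem_map] at hB
      obtain ⟨u₂, hu₂, rfl⟩ := hB
      have hu₂' := Finset.mem_filter.1 (Finset.mem_toList.1 hu₂)
      have hmax₂ : MaxCons true Φ₀ u₂ :=
        ⟨Finset.mem_powerset.1 hu₂'.1, hu₂'.2.2.1, hu₂'.2.1⟩
      exact hall u₁ u₂ hmax₁ hmax₂ hu₁'.2.2.2 hu₂'.2.2.2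
    exact Deriv.mp (Deriv.thm (Prv.mono (Prv.taut (taut_id _)) hB')) h4
  -- Step D : disjunction over T
  set gT : List Formula := T.toList.map bigConj with hgT
  have hD : Deriv true (↑w₁ : Set Formula) (tri (disjList gT) ψ) := by
    apply derivA1
    intro A hA
    rw [hgT, List.mem_map] at hA
    obtain ⟨u₁, hu₁, rfl⟩ := hA
    exact hTstep u₁ (Finset.mem_toList.1 hu₁)
  -- Step E : φ implies the disjunction
  have htE : IsPropTaut (imp (conjList (I.toList.map fun u => neg (bigConj u)))
      (imp φ (disjList (T.toList.map bigConj)))) := by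
    refine taut_E Φ₀ hsim φ hφΦ _ _ ?_
    intro u hu1 hu2 hu3
    by_cases hc : Consistent true (↑u : Set Formula)
    · exact Or.inr (Finset.mem_toList.2 (Finset.mem_filter.2
        ⟨Finset.mem_powerset.2 hu1, hu2, hc, hu3⟩))
    · exact Or.inl (Finset.mem_toList.2 (Finset.mem_filter.2
        ⟨Finset.mem_powerset.2 hu1, hu2, hc, hu3⟩))
  have hIconj : Deriv true (∅ : Set Formula)
      (conjList (I.toList.map fun u => neg (bigConj u))) := by
    apply deriv_conjList_intro
    intro x hx
    rw [List.mem_map] at hx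
    obtain ⟨u, hu, rfl⟩ := hx
    have hu' := Finset.mem_filter.1 (Finset.mem_toList.1 hu)
    exact Deriv.thm (hrefute u hu'.2.2.1)
  have hE : Prv true (imp φ (disjList gT)) :=
    prv_of_deriv_empty (Deriv.mp (Deriv.thm (Prv.taut htE)) hIconj)
  -- Step F
  have hF : Prv true (imp (tri (disjList gT) ψ) (tri φ ψ)) :=
    Prv.mono hE (Prv.taut (taut_id ψ))
  exact hnd (Deriv.mp (Deriv.thm hF) hD)

/-- Truth lemma for the canonical deterministic model K_d of ℜ_d: for every
φ ∈ Φ₀ and every world (w₁,w₂) of K_d, φ ∈ w₁ iff (w₁,w₂) ⊩ φ. -/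
theorem truth_lemma_Kd (Φ₀ : Finset Formula)
    (hsub : SubClosed Φ₀) (hsim : SimClosed Φ₀)
    (φ : Formula) (hφ : φ ∈ Φ₀) (W : KdWorld Φ₀) :
    φ ∈ W.1.1 ↔ Forces (Kdrel Φ₀) (Kdval Φ₀) W φ := by
  classical
  induction φ generalizing W with
  | var n => exact Iff.rfl
  | bot =>
    constructor
    · intro h
      exact absurd (Deriv.hyp (Finset.mem_coe.2 h)) W.2.1.2.1
    · intro h; exact h.elim
  | imp a b iha ihb =>
    obtain ⟨haΦ, hbΦ⟩ := hsub.1 a b hφ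
    have ha := iha haΦ (W := W)
    have hbb := ihb hbΦ (W := W)
    show imp a b ∈ W.1.1 ↔ (Forces (Kdrel Φ₀) (Kdval Φ₀) W a → Forces (Kdrel Φ₀) (Kdval Φ₀) W b)
    rw [← ha, ← hbb]
    constructor
    · intro h hA
      exact mem_of_deriv W.2.1 hbΦ
        (Deriv.mp (Deriv.hyp (Finset.mem_coe.2 h)) (Deriv.hyp (Finset.mem_coe.2 hA)))
    · intro h
      by_cases hA : a ∈ W.1.1
      · exact mem_of_deriv W.2.1 hφ
          (Deriv.mp (Deriv.thm (Prv.taut (taut_k a b)))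
            (Deriv.hyp (Finset.mem_coe.2 (h hA))))
      · have hsa : simNeg a ∈ W.1.1 := (W.2.1.2.2 a haΦ).resolve_left hA
        exact mem_of_deriv W.2.1 hφ
          (Deriv.mp (Deriv.thm (Prv.taut (taut_simNeg_imp a b)))
            (Deriv.hyp (Finset.mem_coe.2 hsa)))
  | tri a b iha ihb =>
    obtain ⟨haΦ, hbΦ⟩ := hsub.2 a b hφ
    constructor
    · intro h
      show ∀ U V, Kdrel Φ₀ W U V → Forces (Kdrel Φ₀) (Kdval Φ₀) U a →
        ∃ V', Kdrel Φ₀ W U V' ∧ Forces (Kdrel Φ₀) (Kdval Φ₀) V' b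
      intro U V hrel hUa
      refine ⟨V, hrel, ?_⟩
      rw [← ihb hbΦ (W := V)]
      by_contra hbV
      have hsb : simNeg b ∈ V.1.1 := (V.2.1.2.2 b hbΦ).resolve_left hbV
      have hUm : a ∈ U.1.1 := (iha haΦ (W := U)).2 hUa
      have t1 : IsPropTaut (imp (bigConj U.1.1) a) :=
        taut_conjList_mem (Finset.mem_toList.2 hUm)
      have t2 : IsPropTaut (imp b (neg (bigConj V.1.1))) :=
        taut_imp_negconj (Finset.mem_toList.2 hsb)
      exact hrel.1 (Deriv.mp (Deriv.thm (Prv.mono (Prv.taut t1) (Prv.taut t2)))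
        (Deriv.hyp (Finset.mem_coe.2 h)))
    · intro hF
      by_contra hmem
      have hnd : ¬ Deriv true (↑W.1.1 : Set Formula) (tri a b) := fun hd =>
        hmem (mem_of_deriv W.2.1 hφ hd)
      obtain ⟨u₁, u₂, hm1, hm2, hφu, hψu, hwc⟩ := key Φ₀ hsub hsim hφ hnd
      let U : KdWorld Φ₀ := ⟨(u₁, u₂), hm1, hm2⟩
      let V : KdWorld Φ₀ := ⟨(u₂, u₂), hm2, hm2⟩
      have hrel : Kdrel Φ₀ W U V := ⟨hwc, rfl, rfl⟩
      have hUa : Forces (Kdrel Φ₀) (Kdval Φ₀) U a := (iha haΦ (W := U)).1 hφu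
      obtain ⟨V', hrel', hVb⟩ := hF U V hrel hUa
      have hVmem : b ∈ V'.1.1 := (ihb hbΦ (W := V')).2 hVb
      have heq : V'.1.1 = u₂ := hrel'.2.1.symm
      exact hψu (heq ▸ hVmem)

end Formula
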